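/- If x* is a local minimizer of F(x)=f(x)+λ‖x‖_p^p with f differentiable, then for every index i, x*_i · ∂f/∂x_i(x*) + λp|x*_i|^p = 0. -/

import Mathlib

/-- If x* is a local minimizer of F(x) = f(x) + λ‖x‖_p^p with f differentiable, then
for every i, x*_i · ∂f/∂x_i(x*) + λp|x*_i|^p = 0. -/
theorem stmt_8 (n : ℕ) (p lam : ℝ) (hp : 0 < p) (hp1 : p < 1) (hlam : 0 < lam)
    (f : EuclideanSpace ℝ (Fin n) → ℝ) (hf : Differentiable ℝ f)
    (x : EuclideanSpace ℝ (Fin n))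
    (hmin : IsLocalMin (fun y => f y + lam * ∑ i, |y i| ^ p) x) :
    ∀ i, x i * fderiv ℝ f x (EuclideanSpace.single i 1) + lam * p * |x i| ^ p = 0 := by
  intro i
  by_cases hxi : x i = 0
  · simp [hxi, Real.zero_rpow hp.ne']
  set v := EuclideanSpace.single i (1:ℝ) with hv
  have hc : ∀ t : ℝ, ∀ j, (x + t • v) j = x j + t * (if j = i then 1 else 0) := by
    intro t j
    simp [v, EuclideanSpace.single_apply]
  have h0 : x + (0:ℝ) • v = x := by simp
  set g : ℝ → ℝ := fun t => f (x + t • v) + lam * ∑ j, |(x + t • v) j| ^ p with hgdef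
  have hcv : HasDerivAt (fun s : ℝ => x + s • v) v 0 := by
    simpa using ((hasDerivAt_id (0:ℝ)).smul_const v).const_add x
  have hmin0 : IsLocalMin g 0 := by
    have hcomp : ((fun y => f y + lam * ∑ j, |y j| ^ p) ∘ fun t : ℝ => x + t • v) = g := rfl
    rw [← hcomp]
    refine IsLocalMin.comp_continuous ?_ hcv.continuousAt
    rw [h0]; exact hmin
  -- derivative of f part
  have hdf : HasDerivAt (fun t : ℝ => f (x + t • v)) (fderiv ℝ f x v) 0 := by
    have hF : HasFDerivAt f (fderiv ℝ f x) (x + (0:ℝ) • v) := by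
      rw [h0]; exact (hf x).hasFDerivAt
    exact hF.comp_hasDerivAt 0 hcv
  -- derivative of each sum term
  have hterm : ∀ j, HasDerivAt (fun t : ℝ => |(x + t • v) j| ^ p)
      (if j = i then p * |x i| ^ (p - 1) * (SignType.sign (x i) : ℝ) else 0) 0 := by
    intro j
    have heq : (fun t : ℝ => |(x + t • v) j| ^ p)
        = fun t => |x j + t * (if j = i then 1 else 0)| ^ p :=
      funext fun t => by rw [hc]
    rw [heq]
    by_cases hj : j = i
    · subst hj
      simp only [if_pos rfl, mul_one]
      have h1 : HasDerivAt (fun t : ℝ => x j + t) 1 0 := by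
        simpa using (hasDerivAt_id (0:ℝ)).const_add (x j)
      have h2 : HasDerivAt (fun u : ℝ => |u|) (SignType.sign (x j) : ℝ) (x j) :=
        hasDerivAt_abs hxi
      have h3 : HasDerivAt (fun u : ℝ => u ^ p) (p * |x j| ^ (p - 1)) |x j| :=
        Real.hasDerivAt_rpow_const (Or.inl (abs_ne_zero.2 hxi))
      have h2' : HasDerivAt (fun u : ℝ => |u|) (SignType.sign (x j) : ℝ) (x j + 0) := by
        simpa using h2
      have h4 : HasDerivAt (fun t : ℝ => |x j + t|) ((SignType.sign (x j) : ℝ) * 1) 0 :=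
        h2'.comp 0 h1
      have h3' : HasDerivAt (fun u : ℝ => u ^ p) (p * |x j| ^ (p - 1)) |x j + 0| := by
        simpa using h3
      have := h3'.comp 0 h4
      simpa [Function.comp_def, mul_comm, mul_assoc, mul_left_comm] using this
    · simp only [if_neg hj, mul_zero, add_zero]
      exact hasDerivAt_const _ _
  have hsum : HasDerivAt (fun t : ℝ => ∑ j, |(x + t • v) j| ^ p)
      (p * |x i| ^ (p - 1) * (SignType.sign (x i) : ℝ)) 0 := by
    have := HasDerivAt.fun_sum (u := Finset.univ) (fun j _ => hterm j)
    simpa using this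
  have hg : HasDerivAt g
      (fderiv ℝ f x v + lam * (p * |x i| ^ (p - 1) * (SignType.sign (x i) : ℝ))) 0 :=
    hdf.add (hsum.const_mul lam)
  have hzero := hmin0.hasDerivAt_eq_zero hg
  -- algebra
  have hsgn : x i * (SignType.sign (x i) : ℝ) = |x i| := by
    rcases lt_trichotomy (x i) 0 with h | h | h
    · simp [sign_neg h, abs_of_neg h]
    · exact absurd h hxi
    · simp [sign_pos h, abs_of_pos h]
  have habs : |x i| ^ (p - 1) * |x i| = |x i| ^ p := by
    have hpos : 0 < |x i| := abs_pos.2 hxi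
    rw [← Real.rpow_add_one (abs_ne_zero.2 hxi) (p - 1)]
    norm_num
  have hfd : fderiv ℝ f x v = -(lam * (p * |x i| ^ (p - 1) * (SignType.sign (x i) : ℝ))) := by
    linarith
  rw [hfd]
  have : x i * -(lam * (p * |x i| ^ (p - 1) * (SignType.sign (x i) : ℝ)))
      = -(lam * p * (|x i| ^ (p - 1) * (x i * (SignType.sign (x i) : ℝ)))) := by ring
  rw [this, hsgn, habs]
  ring
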